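/- Let K be a field of characteristic 0, k ≥ 2, and in K⟨x,y⟩ set u = (xy)^k x, f = u^3 + uv + uw + wu and g = u^2 + v + w, where v = xy and w = yx. Then deg([f,g]) = 2k+5, which is strictly less than deg(g) = 4k+2 and strictly less than deg(f) = 6k+3. -/

import Mathlib

open scoped BigOperators

/-- The total degree of a nonzero element of the free associative algebra,
realized as the monoid algebra of the free monoid: the maximum length of a
monomial appearing with nonzero coefficient. -/
noncomputable def ncDeg {K : Type*} [Field K]
    (p : MonoidAlgebra K (FreeMonoid (Fin 2))) : ℕ :=
  p.coeff.support.sup fun m => m.length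

private def Xw : FreeMonoid (Fin 2) := FreeMonoid.of 0
private def Yw : FreeMonoid (Fin 2) := FreeMonoid.of 1
private def Aw : FreeMonoid (Fin 2) := Xw * Yw
private def Wyx : FreeMonoid (Fin 2) := Yw * Xw
private def Uw (k : ℕ) : FreeMonoid (Fin 2) := Aw ^ k * Xw

private lemma fm_length_pow (a : FreeMonoid (Fin 2)) (n : ℕ) :
    (a ^ n).length = n * a.length := by
  induction n with
  | zero => simp [FreeMonoid.length_one]
  | succ n ih => rw [pow_succ, FreeMonoid.length_mul, ih]; ring

private lemma len_Aw : Aw.length = 2 := rfl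
private lemma len_Wyx : Wyx.length = 2 := rfl
private lemma len_Uw (k : ℕ) : (Uw k).length = 2 * k + 1 := by
  rw [Uw, FreeMonoid.length_mul, fm_length_pow, len_Aw, Xw, FreeMonoid.length_of]; ring

private lemma ne12 (k : ℕ) : Uw k * Aw * Aw ≠ Uw k * Aw * Wyx := by
  intro h
  have h2 : Aw = Wyx := mul_left_cancel h
  have h3 := congrArg FreeMonoid.toList h2
  simp only [Aw, Wyx, Xw, Yw, FreeMonoid.toList_mul, FreeMonoid.toList_of] at h3
  exact absurd h3 (by decide)

private lemma ne13 (m : ℕ) : Uw (m+2) * Aw * Aw ≠ Aw * (Wyx * Uw (m+2)) := by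
  intro h
  have h' := congrArg FreeMonoid.toList h
  rw [Uw, show Aw ^ (m+2) = Aw * (Aw * Aw ^ m) from by rw [pow_succ', pow_succ']] at h'
  simp [Aw, Wyx, Xw, Yw, Uw, FreeMonoid.toList_mul, FreeMonoid.toList_of] at h'

private lemma ne14 (m : ℕ) : Uw (m+2) * Aw * Aw ≠ Wyx * (Wyx * Uw (m+2)) := by
  intro h
  have h' := congrArg FreeMonoid.toList h
  rw [Uw, show Aw ^ (m+2) = Aw * (Aw * Aw ^ m) from by rw [pow_succ', pow_succ']] at h'
  simp [Aw, Wyx, Xw, Yw, Uw, FreeMonoid.toList_mul, FreeMonoid.toList_of] at h'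

private lemma ncDeg_four {K : Type*} [Field K] (a b c d : FreeMonoid (Fin 2))
    (cb cc cd : K) (n : ℕ)
    (hab : a ≠ b) (hac : a ≠ c) (had : a ≠ d)
    (ha : a.length = n) (hb : b.length ≤ n) (hc : c.length ≤ n) (hd : d.length ≤ n) :
    ncDeg (MonoidAlgebra.single a (1:K) + MonoidAlgebra.single b cb
      + MonoidAlgebra.single c cc + MonoidAlgebra.single d cd) = n := by
  classical
  set p : MonoidAlgebra K (FreeMonoid (Fin 2)) :=
    MonoidAlgebra.single a (1:K) + MonoidAlgebra.single b cb
      + MonoidAlgebra.single c cc + MonoidAlgebra.single d cd with hp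
  have hsub : ∀ m ∈ p.coeff.support, m = a ∨ m = b ∨ m = c ∨ m = d := by
    intro m hm
    simp only [hp, MonoidAlgebra.coeff_add, MonoidAlgebra.coeff_single] at hm
    have h1 := Finsupp.support_add (g₁ := Finsupp.single a (1:K) + Finsupp.single b cb
      + Finsupp.single c cc) (g₂ := Finsupp.single d cd) hm
    simp only [Finset.mem_union] at h1
    rcases h1 with h1 | h1
    · have h2 := Finsupp.support_add (g₁ := Finsupp.single a (1:K) + Finsupp.single b cb)
        (g₂ := Finsupp.single c cc) h1
      simp only [Finset.mem_union] at h2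
      rcases h2 with h2 | h2
      · have h3 := Finsupp.support_add (g₁ := Finsupp.single a (1:K))
          (g₂ := Finsupp.single b cb) h2
        simp only [Finset.mem_union] at h3
        rcases h3 with h3 | h3
        · have := Finsupp.support_single_subset h3
          simp only [Finset.mem_singleton] at this
          tauto
        · have := Finsupp.support_single_subset h3
          simp only [Finset.mem_singleton] at this
          tauto
      · have := Finsupp.support_single_subset h2
        simp only [Finset.mem_singleton] at this
        tauto
    · have := Finsupp.support_single_subset h1
      simp only [Finset.mem_singleton] at this
      tauto
  have hmem : a ∈ p.coeff.support := by
    rw [Finsupp.mem_support_iff, hp]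
    show ¬ (Finsupp.single a (1:K) + Finsupp.single b cb + Finsupp.single c cc
      + Finsupp.single d cd) a = 0
    simp [Finsupp.add_apply, Finsupp.single_apply, Ne.symm hab, Ne.symm hac, Ne.symm had]
  apply le_antisymm
  · apply Finset.sup_le
    intro m hm
    rcases hsub m hm with rfl | rfl | rfl | rfl <;> omega
  · calc n = a.length := ha.symm
      _ ≤ _ := Finset.le_sup hmem

/-- For `k ≥ 2`, with `u = (xy)^k x`, `v = xy`, `w = yx`,
`f = u^3 + uv + uw + wu` and `g = u^2 + v + w` in `K⟨x,y⟩`, one has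
`deg([f,g]) = 2k+5 < deg(g) = 4k+2 < deg(f) = 6k+3`. -/
theorem stmt_4 (K : Type*) [Field K] [CharZero K] (k : ℕ) (hk : 2 ≤ k)
    (x y : MonoidAlgebra K (FreeMonoid (Fin 2)))
    (hx : x = MonoidAlgebra.of K (FreeMonoid (Fin 2)) (FreeMonoid.of 0))
    (hy : y = MonoidAlgebra.of K (FreeMonoid (Fin 2)) (FreeMonoid.of 1))
    (u v w f g : MonoidAlgebra K (FreeMonoid (Fin 2)))
    (hu : u = (x * y) ^ k * x) (hv : v = x * y) (hw : w = y * x)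
    (hf : f = u ^ 3 + u * v + u * w + w * u) (hg : g = u ^ 2 + v + w) :
    ncDeg (f * g - g * f) = 2 * k + 5 ∧
    ncDeg g = 4 * k + 2 ∧
    ncDeg f = 6 * k + 3 ∧
    ncDeg (f * g - g * f) < ncDeg g ∧
    ncDeg (f * g - g * f) < ncDeg f := by
  obtain ⟨m, rfl⟩ : ∃ m, k = m + 2 := ⟨k - 2, by omega⟩
  set k := m + 2 with hk'
  -- key monoid relations
  have h1 : u * w = v * u := by
    rw [hu, hv, hw, mul_assoc, ← mul_assoc x y x, ← mul_assoc, ← pow_succ, pow_succ', mul_assoc]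
  have h2 : u * (u * (w * u)) = u * v * (u * u) := by
    rw [← mul_assoc u w u, h1, mul_assoc v u u, ← mul_assoc u v (u*u)]
  -- the commutator identity
  have key : f * g - g * f = u*v*v + u*v*w - v*(w*u) - w*(w*u) := by
    have e : f * g - g * f - (u*v*v + u*v*w - v*(w*u) - w*(w*u))
        = (u*w - v*u)*(u^2+v+w) + (u*v*(u*u) - u*(u*(w*u))) := by
      rw [hf, hg]; noncomm_ring
    rw [h1, h2, sub_self, sub_self, zero_mul, add_zero] at e
    exact sub_eq_zero.mp e
  -- single-monomial forms
  have hu1 : u = MonoidAlgebra.single (Uw k) (1:K) := by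
    rw [hu, hx, hy, ← map_mul, ← map_pow, ← map_mul, MonoidAlgebra.of_apply]
    rfl
  have hv1 : v = MonoidAlgebra.single Aw (1:K) := by
    rw [hv, hx, hy, ← map_mul, MonoidAlgebra.of_apply]; rfl
  have hw1 : w = MonoidAlgebra.single Wyx (1:K) := by
    rw [hw, hx, hy, ← map_mul, MonoidAlgebra.of_apply]; rfl
  -- degree of the commutator
  have d1 : ncDeg (f * g - g * f) = 2 * k + 5 := by
    have hfg : f * g - g * f
        = MonoidAlgebra.single (Uw k * Aw * Aw) (1:K)
          + MonoidAlgebra.single (Uw k * Aw * Wyx) (1:K)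
          + MonoidAlgebra.single (Aw * (Wyx * Uw k)) (-1:K)
          + MonoidAlgebra.single (Wyx * (Wyx * Uw k)) (-1:K) := by
      rw [key, hu1, hv1, hw1]
      simp only [MonoidAlgebra.single_mul_single, one_mul, mul_one]
      rw [sub_eq_add_neg, sub_eq_add_neg, ← MonoidAlgebra.single_neg, ← MonoidAlgebra.single_neg]
    rw [hfg]
    refine ncDeg_four _ _ _ _ _ _ _ _ (ne12 k) (ne13 m) (ne14 m) ?_ ?_ ?_ ?_ <;>
      simp [FreeMonoid.length_mul, len_Uw, len_Aw, len_Wyx] <;> omega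
  have d2 : ncDeg g = 4 * k + 2 := by
    have hg2 : g = MonoidAlgebra.single (Uw k * Uw k) (1:K)
        + MonoidAlgebra.single Aw (1:K) + MonoidAlgebra.single Wyx (1:K)
        + MonoidAlgebra.single Wyx (0:K) := by
      rw [hg, hu1, hv1, hw1, pow_two]
      simp only [MonoidAlgebra.single_mul_single, one_mul, MonoidAlgebra.single_zero, add_zero]
    rw [hg2]
    refine ncDeg_four _ _ _ _ _ _ _ _ ?_ ?_ ?_ ?_ ?_ ?_ ?_
    · intro h; have := congrArg FreeMonoid.length h
      rw [FreeMonoid.length_mul, len_Uw, len_Aw] at this; omega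
    · intro h; have := congrArg FreeMonoid.length h
      rw [FreeMonoid.length_mul, len_Uw, len_Wyx] at this; omega
    · intro h; have := congrArg FreeMonoid.length h
      rw [FreeMonoid.length_mul, len_Uw, len_Wyx] at this; omega
    · rw [FreeMonoid.length_mul, len_Uw]; omega
    · rw [len_Aw]; omega
    · rw [len_Wyx]; omega
    · rw [len_Wyx]; omega
  have d3 : ncDeg f = 6 * k + 3 := by
    have hf2 : f = MonoidAlgebra.single (Uw k * Uw k * Uw k) (1:K)
        + MonoidAlgebra.single (Uw k * Aw) (1:K)
        + MonoidAlgebra.single (Uw k * Wyx) (1:K)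
        + MonoidAlgebra.single (Wyx * Uw k) (1:K) := by
      rw [hf, hu1, hv1, hw1, pow_succ, pow_two]
      simp only [MonoidAlgebra.single_mul_single, one_mul, mul_one]
    rw [hf2]
    refine ncDeg_four _ _ _ _ _ _ _ _ ?_ ?_ ?_ ?_ ?_ ?_ ?_
    · intro h; have := congrArg FreeMonoid.length h
      simp only [FreeMonoid.length_mul, len_Uw, len_Aw] at this; omega
    · intro h; have := congrArg FreeMonoid.length h
      simp only [FreeMonoid.length_mul, len_Uw, len_Wyx] at this; omega
    · intro h; have := congrArg FreeMonoid.length h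
      simp only [FreeMonoid.length_mul, len_Uw, len_Wyx] at this; omega
    · simp only [FreeMonoid.length_mul, len_Uw]; omega
    · simp only [FreeMonoid.length_mul, len_Uw, len_Aw]; omega
    · simp only [FreeMonoid.length_mul, len_Uw, len_Wyx]; omega
    · simp only [FreeMonoid.length_mul, len_Uw, len_Wyx]; omega
  exact ⟨d1, d2, d3, by omega, by omega⟩
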